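/- Let Ω₁ ⊂ ℍₛⁿ be real-path-connected, Ω₂ ⊂ ℍₛⁿ be Ω₁-stem-preserving, f ∈ 𝒫𝒮(Ω₁) with stem function F, and g ∈ 𝒫𝒮(Ω₂). Then f*g : Ω₁ → ℍ is path-slice, and F * F_{Ω₁}^g is a path-slice stem function of f*g. -/

import Mathlib

noncomputable section
open Quaternion Matrix

abbrev Hq := Quaternion ℝ

/-- The set of quaternionic imaginary units. -/
def Sph : Set Hq := {I | I ^ 2 = -1}

/-- `Ψ_i^I` applied to a single complex number: `x + y i ↦ x + y I`. -/
def psi (I : Hq) (z : ℂ) : Hq := (z.re : Hq) + z.im • I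

/-- `Ψ_i^I : ℂⁿ → ℂ_Iⁿ`, componentwise. -/
def liftMap {n : ℕ} (I : Hq) (z : Fin n → ℂ) : Fin n → Hq := fun k => psi I (z k)

/-- The weakly slice cone `Hqₛⁿ = ⋃_{I∈𝕊} ℂ_Iⁿ`. -/
def HSn (n : ℕ) : Set (Fin n → Hq) := {q | ∃ I ∈ Sph, ∃ z : Fin n → ℂ, q = liftMap I z}

/-- A point of `ℂⁿ` is real. -/
def isRealPt {n : ℕ} (z : Fin n → ℂ) : Prop := ∀ k, (z k).im = 0

/-- A point of `Hqⁿ` is real. -/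
def isRealH {n : ℕ} (q : Fin n → Hq) : Prop := ∀ k, q k = ((q k).re : Hq)

/-- The lifted path `γ^I = Ψ_i^I ∘ γ`. -/
def liftP {n : ℕ} (γ : C(unitInterval, Fin n → ℂ)) (I : Hq) (t : unitInterval) : Fin n → Hq :=
  liftMap I (γ t)

/-- `𝕊(Ω, γ) = {I ∈ 𝕊 : γ^I ⊂ Ω}`. -/
def SUnits {n : ℕ} (Ω : Set (Fin n → Hq)) (γ : C(unitInterval, Fin n → ℂ)) : Set Hq :=
  {I | I ∈ Sph ∧ ∀ t, liftP γ I t ∈ Ω}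

/-- `𝒫(ℂⁿ, Ω)`: continuous paths starting in `ℝⁿ` with some lift inside `Ω`. -/
def PathsTo {n : ℕ} (Ω : Set (Fin n → Hq)) : Set C(unitInterval, Fin n → ℂ) :=
  {γ | isRealPt (γ 0) ∧ ∃ I, I ∈ SUnits Ω γ}

/-- `F` is a path-slice stem function of `f` on `Ω`:
`f(γ^I(1)) = (1, I)·F(γ)`. -/
def IsStem {n : ℕ} (Ω : Set (Fin n → Hq)) (f : (Fin n → Hq) → Hq)
    (F : C(unitInterval, Fin n → ℂ) → Fin 2 → Hq) : Prop :=
  ∀ γ ∈ PathsTo Ω, ∀ I ∈ SUnits Ω γ, f (liftP γ I 1) = F γ 0 + I * F γ 1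

/-- `f` is path-slice on `Ω`. -/
def IsPathSlice {n : ℕ} (Ω : Set (Fin n → Hq)) (f : (Fin n → Hq) → Hq) : Prop :=
  ∃ F, IsStem Ω f F

/-- `Ω` is real-path-connected. -/
def RealPathConnected {n : ℕ} (Ω : Set (Fin n → Hq)) : Prop :=
  ∀ q ∈ Ω, ∃ γ ∈ PathsTo Ω, ∃ I ∈ SUnits Ω γ, liftP γ I 1 = q

/-- `Ω₂` is `Ω₁`-stem-preserving: (i) every path of `𝒫(ℂⁿ,Ω₁)` has at least two
units in `𝕊(Ω₂,γ)`; (ii) two paths with the same endpoint share `≠ 1` units. -/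
def StemPreserving {n : ℕ} (Ω₁ Ω₂ : Set (Fin n → Hq)) : Prop :=
  (∀ γ ∈ PathsTo Ω₁, ∃ I ∈ SUnits Ω₂ γ, ∃ J ∈ SUnits Ω₂ γ, I ≠ J) ∧
  (∀ α ∈ PathsTo Ω₁, ∀ β ∈ PathsTo Ω₁, α 1 = β 1 →
    ∀ I ∈ SUnits Ω₂ α ∩ SUnits Ω₂ β, ∃ J ∈ SUnits Ω₂ α ∩ SUnits Ω₂ β, J ≠ I)

/-- The formula `((1,I),(1,J))⁻¹ (f(γ^I(1)), f(γ^J(1)))ᵀ`. -/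
def stemFormula {n : ℕ} (f : (Fin n → Hq) → Hq) (γ : C(unitInterval, Fin n → ℂ)) (I J : Hq) :
    Fin 2 → Hq :=
  ((I - J)⁻¹ • !![I, -J; (1 : Hq), -1]).mulVec ![f (liftP γ I 1), f (liftP γ J 1)]

/-- The sub-stem function `F_{Ω₁}^f` (depends only on `Ω₂` and `f`). -/
noncomputable def subStem {n : ℕ} (Ω₂ : Set (Fin n → Hq)) (f : (Fin n → Hq) → Hq)
    (γ : C(unitInterval, Fin n → ℂ)) : Fin 2 → Hq := by
  classical
  exact if h : ∃ p : Hq × Hq, p.1 ∈ SUnits Ω₂ γ ∧ p.2 ∈ SUnits Ω₂ γ ∧ p.1 ≠ p.2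
    then stemFormula f γ h.choose.1 h.choose.2
    else 0

/-- Normalized imaginary part of a quaternion. -/
def imUnit (a : Hq) : Hq := (‖a - (a.re : Hq)‖)⁻¹ • (a - (a.re : Hq))

/-- The map `𝔍 : Hqₛⁿ → 𝕊 ∪ {0}`. -/
noncomputable def Jmap {n : ℕ} (q : Fin n → Hq) : Hq := by
  classical
  exact if h : ∃ k : Fin n, q k ≠ ((q k).re : Hq) then
    imUnit (q ((Finset.univ.filter fun k => q k ≠ ((q k).re : Hq)).min'
      ⟨h.choose, Finset.mem_filter.2 ⟨Finset.mem_univ _, h.choose_spec⟩⟩))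
  else 0

/-- Componentwise complex conjugate of a path. -/
def conjPath {n : ℕ} (γ : C(unitInterval, Fin n → ℂ)) : C(unitInterval, Fin n → ℂ) :=
  ⟨fun t k => star (γ t k),
    continuous_pi fun k => continuous_star.comp ((continuous_apply k).comp γ.continuous)⟩

/-- The point-form sub-stem function `ℱ_{Ω₁}^f : Ω₁ → Hq^{2×1}`. -/
noncomputable def pointStem {n : ℕ} (Ω₁ Ω₂ : Set (Fin n → Hq)) (f : (Fin n → Hq) → Hq)
    (q : Fin n → Hq) : Fin 2 → Hq := by
  classical
  exact if isRealH q then ![f q, 0]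
    else if h : ∃ γ, γ ∈ PathsTo Ω₁ ∧ (∀ t, liftP γ (Jmap q) t ∈ Ω₁) ∧ liftP γ (Jmap q) 1 = q
    then subStem Ω₂ f h.choose
    else 0

/-- The `*`-product of functions: `(f*g)(q) = (f(q), 𝔍(q)f(q)) · ℱ_{Ω₁}^g(q)`. -/
noncomputable def starProd {n : ℕ} (Ω₁ Ω₂ : Set (Fin n → Hq)) (f g : (Fin n → Hq) → Hq)
    (q : Fin n → Hq) : Hq :=
  f q * pointStem Ω₁ Ω₂ g q 0 + (Jmap q * f q) * pointStem Ω₁ Ω₂ g q 1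

/-- The `*`-product on `Hq^{2×1}` coming from `Hq ⊗_ℝ ℂ`. -/
def vstar (p q : Fin 2 → Hq) : Fin 2 → Hq :=
  ![p 0 * q 0 - p 1 * q 1, p 1 * q 0 + p 0 * q 1]

/-- `Ω` is slice-open: a subset of `Hqₛⁿ` all of whose slices are open. -/
def SliceOpen {n : ℕ} (Ω : Set (Fin n → Hq)) : Prop :=
  Ω ⊆ HSn n ∧ ∀ I ∈ Sph, IsOpen {z : Fin n → ℂ | liftMap I z ∈ Ω}

/-- `Ω` is slice-connected. -/
def SliceConnected {n : ℕ} (Ω : Set (Fin n → Hq)) : Prop :=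
  ∀ U V : Set (Fin n → Hq), SliceOpen U → SliceOpen V → Ω ⊆ U ∪ V →
    (Ω ∩ U).Nonempty → (Ω ∩ V).Nonempty → (Ω ∩ U ∩ V).Nonempty

/-- `Ω` is a slice-domain. -/
def SliceDomain {n : ℕ} (Ω : Set (Fin n → Hq)) : Prop :=
  SliceOpen Ω ∧ SliceConnected Ω

/-- `Ω` is self-stem-preserving. -/
def SelfStemPreserving {n : ℕ} (Ω : Set (Fin n → Hq)) : Prop :=
  RealPathConnected Ω ∧ StemPreserving Ω Ω

/-- `Ω` is open in the Euclidean subspace topology of `Hqₛⁿ`. -/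
def EuclideanOpenIn {n : ℕ} (Ω : Set (Fin n → Hq)) : Prop :=
  ∃ U : Set (Fin n → Hq), IsOpen U ∧ Ω = U ∩ HSn n

/-- `Ω` is weakly axially symmetric. -/
def WeaklyAxiallySymmetric {n : ℕ} (Ω : Set (Fin n → Hq)) : Prop :=
  ∀ (x y : Fin n → ℝ) (I : Hq), I ∈ Sph →
    (fun k => (x k : Hq) + y k • I) ∈ Ω → (fun k => (x k : Hq) - y k • I) ∈ Ω
/-! ### Auxiliary lemmas -/

section Aux

lemma sph_re {I : Hq} (h : I ∈ Sph) : I.re = 0 := by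
  have h' : I * I = -1 := by have : I ^ 2 = -1 := h; rwa [pow_two] at this
  have h0 := congrArg QuaternionAlgebra.re h'
  have h1 := congrArg QuaternionAlgebra.imI h'
  have h2 := congrArg QuaternionAlgebra.imJ h'
  have h3 := congrArg QuaternionAlgebra.imK h'
  simp only [Quaternion.re_mul, Quaternion.imI_mul, Quaternion.imJ_mul, Quaternion.imK_mul,
    Quaternion.re_neg, Quaternion.imI_neg, Quaternion.imJ_neg, Quaternion.imK_neg,
    Quaternion.re_one, Quaternion.imI_one, Quaternion.imJ_one, Quaternion.imK_one] at h0 h1 h2 h3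
  by_contra hre
  have hx : I.imI = 0 := by
    rcases mul_eq_zero.1 (show I.re * I.imI = 0 by linarith) with h' | h'
    exacts [absurd h' hre, h']
  have hy : I.imJ = 0 := by
    rcases mul_eq_zero.1 (show I.re * I.imJ = 0 by linarith) with h' | h'
    exacts [absurd h' hre, h']
  have hz : I.imK = 0 := by
    rcases mul_eq_zero.1 (show I.re * I.imK = 0 by linarith) with h' | h'
    exacts [absurd h' hre, h']
  rw [hx, hy, hz] at h0
  nlinarith [sq_nonneg I.re]

lemma sph_normSq {I : Hq} (h : I ∈ Sph) : Quaternion.normSq I = 1 := by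
  have h' : I * I = -1 := by have : I ^ 2 = -1 := h; rwa [pow_two] at this
  have h0 := congrArg QuaternionAlgebra.re h'
  simp only [Quaternion.re_mul, Quaternion.re_neg, Quaternion.re_one] at h0
  have hre := sph_re h
  rw [Quaternion.normSq_def']
  nlinarith

lemma sph_norm {I : Hq} (h : I ∈ Sph) : ‖I‖ = 1 := by
  have h1 : ‖I‖ * ‖I‖ = 1 := by rw [← Quaternion.normSq_eq_norm_mul_self]; exact sph_normSq h
  nlinarith [norm_nonneg I]

lemma sph_ne_zero {I : Hq} (h : I ∈ Sph) : I ≠ 0 := by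
  intro h0
  have : I ^ 2 = -1 := h
  rw [h0] at this
  simp at this

lemma sph_neg {I : Hq} (h : I ∈ Sph) : -I ∈ Sph := by
  show (-I) ^ 2 = -1
  rw [neg_sq]; exact h

lemma psi_re {I : Hq} (hI : I ∈ Sph) (z : ℂ) : (psi I z).re = z.re := by
  simp [psi, sph_re hI]

lemma psi_sub_re {I : Hq} (hI : I ∈ Sph) (z : ℂ) :
    psi I z - (((psi I z).re : ℝ) : Hq) = z.im • I := by
  rw [psi_re hI]
  show (z.re : Hq) + z.im • I - (z.re : Hq) = z.im • I
  rw [add_sub_cancel_left]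

lemma psi_of_im_zero (I : Hq) {z : ℂ} (h : z.im = 0) : psi I z = ((z.re : ℝ) : Hq) := by
  simp [psi, h]

lemma psi_real_iff {I : Hq} (hI : I ∈ Sph) (z : ℂ) :
    psi I z = (((psi I z).re : ℝ) : Hq) ↔ z.im = 0 := by
  rw [← sub_eq_zero, psi_sub_re hI, smul_eq_zero]
  simp [sph_ne_zero hI]

lemma psi_inj {I : Hq} (hI : I ∈ Sph) {z w : ℂ} (h : psi I z = psi I w) : z = w := by
  have hre : z.re = w.re := by
    have := congrArg QuaternionAlgebra.re h
    rwa [psi_re hI, psi_re hI] at this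
  have him : z.im = w.im := by
    have h2 : z.im • I = w.im • I := by
      have := psi_sub_re hI z
      rw [h, psi_sub_re hI w] at this
      exact this.symm
    have h3 : (z.im - w.im) • I = 0 := by rw [sub_smul, h2, sub_self]
    rcases smul_eq_zero.1 h3 with h4 | h4
    · linarith [sub_eq_zero.1 (by exact_mod_cast sub_eq_zero.2 (sub_eq_zero.1 (by simpa using h4)))]
    · exact absurd h4 (sph_ne_zero hI)
  exact Complex.ext hre him

lemma psi_neg_conj (I : Hq) (z : ℂ) : psi (-I) (star z) = psi I z := by
  unfold psi
  have h1 : (star z).re = z.re := rfl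
  have h2 : (star z).im = -z.im := rfl
  rw [h1, h2, smul_neg, neg_smul, neg_neg]

lemma liftMap_inj {n : ℕ} {I : Hq} (hI : I ∈ Sph) {z w : Fin n → ℂ}
    (h : liftMap I z = liftMap I w) : z = w :=
  funext fun k => psi_inj hI (congrFun h k)

lemma imUnit_psi {I : Hq} (hI : I ∈ Sph) {z : ℂ} (him : z.im ≠ 0) :
    ∃ ε : ℝ, (ε = 1 ∨ ε = -1) ∧ imUnit (psi I z) = ε • I := by
  have hnorm : ‖z.im • I‖ = |z.im| := by
    rw [norm_smul, sph_norm hI, mul_one, Real.norm_eq_abs]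
  refine ⟨|z.im|⁻¹ * z.im, ?_, ?_⟩
  · rcases abs_choice z.im with h | h
    · left; rw [h]; field_simp
    · right; rw [h]; field_simp
  · unfold imUnit
    rw [psi_sub_re hI, hnorm, smul_smul]

lemma not_isRealH_iff {n : ℕ} (q : Fin n → Hq) :
    ¬ isRealH q ↔ ∃ k, q k ≠ (((q k).re : ℝ) : Hq) := by
  unfold isRealH
  push_neg
  rfl

lemma Jmap_real {n : ℕ} {q : Fin n → Hq} (h : isRealH q) : Jmap q = 0 := by
  unfold Jmap
  rw [dif_neg]
  rw [not_exists]
  intro k hk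
  exact hk (h k)

lemma Jmap_spec {n : ℕ} (q : Fin n → Hq) (h : ¬ isRealH q) :
    ∃ k, q k ≠ (((q k).re : ℝ) : Hq) ∧ Jmap q = imUnit (q k) := by
  classical
  have hex : ∃ k, q k ≠ (((q k).re : ℝ) : Hq) := (not_isRealH_iff q).1 h
  unfold Jmap
  rw [dif_pos hex]
  refine ⟨_, ?_, rfl⟩
  have hmem := Finset.min'_mem (Finset.univ.filter fun k => q k ≠ (((q k).re : ℝ) : Hq))
    ⟨hex.choose, Finset.mem_filter.2 ⟨Finset.mem_univ _, hex.choose_spec⟩⟩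
  exact (Finset.mem_filter.1 hmem).2

lemma Jmap_liftMap {n : ℕ} {I : Hq} (hI : I ∈ Sph) (z : Fin n → ℂ)
    (h : ¬ isRealH (liftMap I z)) :
    ∃ ε : ℝ, (ε = 1 ∨ ε = -1) ∧ Jmap (liftMap I z) = ε • I := by
  obtain ⟨k, hk, hJ⟩ := Jmap_spec _ h
  have him : (z k).im ≠ 0 := by
    intro h0
    exact hk ((psi_real_iff hI (z k)).2 h0)
  obtain ⟨ε, h1, h2⟩ := imUnit_psi hI him
  exact ⟨ε, h1, by rw [hJ]; exact h2⟩

lemma stem_unique {a b c d J K : Hq} (hJK : J ≠ K)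
    (h1 : a + J * b = c + J * d) (h2 : a + K * b = c + K * d) : a = c ∧ b = d := by
  have hbd : b = d := by
    have h3 : J * b - K * b = J * d - K * d := by
      have : (a + J * b) - (a + K * b) = (c + J * d) - (c + K * d) := by rw [h1, h2]
      simpa [add_sub_add_left_eq_sub] using this
    rw [← sub_mul, ← sub_mul] at h3
    exact mul_left_cancel₀ (sub_ne_zero.2 hJK) h3
  refine ⟨?_, hbd⟩
  rw [hbd] at h1
  exact add_right_cancel h1

lemma stemFormula_eq {n : ℕ} (g : (Fin n → Hq) → Hq) (γ : C(unitInterval, Fin n → ℂ))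
    {J K G0 G1 : Hq} (hJ : J ∈ Sph) (hK : K ∈ Sph) (hne : J ≠ K)
    (hgJ : g (liftP γ J 1) = G0 + J * G1) (hgK : g (liftP γ K 1) = G0 + K * G1) :
    stemFormula g γ J K = ![G0, G1] := by
  have hJJ : J * J = -1 := by have : J ^ 2 = -1 := hJ; rwa [pow_two] at this
  have hKK : K * K = -1 := by have : K ^ 2 = -1 := hK; rwa [pow_two] at this
  have hJKne : J - K ≠ 0 := sub_ne_zero.2 hne
  funext i
  fin_cases i
  · show stemFormula g γ J K 0 = G0
    simp only [stemFormula, Matrix.mulVec, dotProduct, Fin.sum_univ_two,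
      Matrix.smul_apply, smul_eq_mul, Matrix.cons_val', Matrix.cons_val_zero,
      Matrix.cons_val_one, Matrix.head_cons, Matrix.empty_val', Matrix.cons_val_fin_one,
      Matrix.head_fin_const, Matrix.of_apply, hgJ, hgK]
    calc (J - K)⁻¹ * J * (G0 + J * G1) + (J - K)⁻¹ * (-K) * (G0 + K * G1)
        = (J - K)⁻¹ * ((J - K) * G0) + ((J - K)⁻¹ * (J * J * G1) -
            (J - K)⁻¹ * (K * K * G1)) := by noncomm_ring
      _ = G0 := by
          rw [hJJ, hKK, sub_self, add_zero, ← mul_assoc, inv_mul_cancel₀ hJKne, one_mul]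
  · show stemFormula g γ J K 1 = G1
    simp only [stemFormula, Matrix.mulVec, dotProduct, Fin.sum_univ_two,
      Matrix.smul_apply, smul_eq_mul, Matrix.cons_val', Matrix.cons_val_zero,
      Matrix.cons_val_one, Matrix.head_cons, Matrix.empty_val', Matrix.cons_val_fin_one,
      Matrix.head_fin_const, Matrix.of_apply, hgJ, hgK]
    calc (J - K)⁻¹ * 1 * (G0 + J * G1) + (J - K)⁻¹ * (-1) * (G0 + K * G1)
        = (J - K)⁻¹ * ((J - K) * G1) := by noncomm_ring
      _ = G1 := by rw [← mul_assoc, inv_mul_cancel₀ hJKne, one_mul]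

lemma subStem_eq {n : ℕ} {Ω₂ : Set (Fin n → Hq)} {g : (Fin n → Hq) → Hq}
    {G : C(unitInterval, Fin n → ℂ) → Fin 2 → Hq} (hG : IsStem Ω₂ g G)
    {γ : C(unitInterval, Fin n → ℂ)} (hγ : γ ∈ PathsTo Ω₂)
    (hpair : ∃ p : Hq × Hq, p.1 ∈ SUnits Ω₂ γ ∧ p.2 ∈ SUnits Ω₂ γ ∧ p.1 ≠ p.2) :
    subStem Ω₂ g γ = ![G γ 0, G γ 1] := by
  unfold subStem
  rw [dif_pos hpair]
  obtain ⟨hJ, hK, hne⟩ := hpair.choose_spec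
  exact stemFormula_eq g γ hJ.1 hK.1 hne (hG γ hγ _ hJ) (hG γ hγ _ hK)

lemma liftP_conj {n : ℕ} (γ : C(unitInterval, Fin n → ℂ)) (K : Hq) (t : unitInterval) :
    liftP (conjPath γ) (-K) t = liftP γ K t :=
  funext fun k => psi_neg_conj K (γ t k)

/-- Two paths with real start, same endpoint, and a common unit whose lifts stay in `Ω₁`
share at least two units with lifts in `Ω₂`. -/
lemma shared_units {n : ℕ} {Ω₁ Ω₂ : Set (Fin n → Hq)} (h₂ : StemPreserving Ω₁ Ω₂)
    {α β : C(unitInterval, Fin n → ℂ)} {I : Hq} (hI : I ∈ Sph)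
    (h0 : isRealPt (α 0)) (hα : ∀ t, liftP α I t ∈ Ω₁) (hβ : ∀ t, liftP β I t ∈ Ω₁)
    (hend : α 1 = β 1) :
    ∃ K L : Hq, K ≠ L ∧ (K ∈ SUnits Ω₂ α ∧ K ∈ SUnits Ω₂ β) ∧
      (L ∈ SUnits Ω₂ α ∧ L ∈ SUnits Ω₂ β) := by
  let A : Path (α 0) (β 1) := Path.cast ⟨α, rfl, rfl⟩ rfl hend.symm
  let B : Path (β 0) (β 1) := ⟨β, rfl, rfl⟩
  let δp := A.trans B.symm
  let δ : C(unitInterval, Fin n → ℂ) := δp.toContinuousMap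
  have hrange : Set.range ⇑δp = Set.range ⇑α ∪ Set.range ⇑β := by
    rw [show ⇑δp = ⇑(A.trans B.symm) from rfl, Path.trans_range, Path.symm_range]
    congr 1
  have hmemδ : δ ∈ PathsTo Ω₁ := by
    refine ⟨?_, I, hI, ?_⟩
    · have h00 : δ 0 = α 0 := δp.source
      rw [h00]; exact h0
    · intro t
      have ht : δ t ∈ Set.range ⇑α ∪ Set.range ⇑β := by
        rw [← hrange]; exact ⟨t, rfl⟩
      rcases ht with ⟨s, hs⟩ | ⟨s, hs⟩
      · show liftMap I (δ t) ∈ Ω₁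
        rw [← hs]; exact hα s
      · show liftMap I (δ t) ∈ Ω₁
        rw [← hs]; exact hβ s
  obtain ⟨K, hK, L, hL, hKL⟩ := h₂.1 δ hmemδ
  have hsubs : ∀ {M : Hq}, M ∈ SUnits Ω₂ δ → M ∈ SUnits Ω₂ α ∧ M ∈ SUnits Ω₂ β := by
    intro M hM
    constructor
    · refine ⟨hM.1, fun t => ?_⟩
      have ht : α t ∈ Set.range ⇑δp := by rw [hrange]; exact Or.inl ⟨t, rfl⟩
      obtain ⟨s, hs⟩ := ht
      show liftMap M (α t) ∈ Ω₂
      rw [← hs]; exact hM.2 s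
    · refine ⟨hM.1, fun t => ?_⟩
      have ht : β t ∈ Set.range ⇑δp := by rw [hrange]; exact Or.inr ⟨t, rfl⟩
      obtain ⟨s, hs⟩ := ht
      show liftMap M (β t) ∈ Ω₂
      rw [← hs]; exact hM.2 s
  exact ⟨K, L, hKL, hsubs hK, hsubs hL⟩

/-- Path-slice stem values of `g` only depend on the endpoint of the path. -/
lemma stem_endpoint_eq {n : ℕ} {Ω₁ Ω₂ : Set (Fin n → Hq)} (h₂ : StemPreserving Ω₁ Ω₂)
    {g : (Fin n → Hq) → Hq} {G : C(unitInterval, Fin n → ℂ) → Fin 2 → Hq}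
    (hG : IsStem Ω₂ g G) {α β : C(unitInterval, Fin n → ℂ)} {I : Hq} (hI : I ∈ Sph)
    (hα0 : isRealPt (α 0)) (hβ0 : isRealPt (β 0))
    (hα : ∀ t, liftP α I t ∈ Ω₁) (hβ : ∀ t, liftP β I t ∈ Ω₁) (hend : α 1 = β 1) :
    G α 0 = G β 0 ∧ G α 1 = G β 1 := by
  obtain ⟨K, L, hKL, ⟨hKα, hKβ⟩, ⟨hLα, hLβ⟩⟩ := shared_units h₂ hI hα0 hα hβ hend
  have hαm : α ∈ PathsTo Ω₂ := ⟨hα0, K, hKα⟩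
  have hβm : β ∈ PathsTo Ω₂ := ⟨hβ0, K, hKβ⟩
  have hendK : ∀ M : Hq, liftP α M 1 = liftP β M 1 := fun M => by
    show liftMap M (α 1) = liftMap M (β 1); rw [hend]
  have e1 : G α 0 + K * G α 1 = G β 0 + K * G β 1 := by
    rw [← hG α hαm K hKα, ← hG β hβm K hKβ, hendK K]
  have e2 : G α 0 + L * G α 1 = G β 0 + L * G β 1 := by
    rw [← hG α hαm L hLα, ← hG β hβm L hLβ, hendK L]
  exact stem_unique hKL e1 e2

/-- Stem values on the conjugated path. -/
lemma stem_conj {n : ℕ} {Ω₁ Ω₂ : Set (Fin n → Hq)} (h₂ : StemPreserving Ω₁ Ω₂)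
    {g : (Fin n → Hq) → Hq} {G : C(unitInterval, Fin n → ℂ) → Fin 2 → Hq}
    (hG : IsStem Ω₂ g G) {γ : C(unitInterval, Fin n → ℂ)} (hγ : γ ∈ PathsTo Ω₁) :
    G (conjPath γ) 0 = G γ 0 ∧ G (conjPath γ) 1 = - G γ 1 := by
  obtain ⟨K, hK, L, hL, hKL⟩ := h₂.1 γ hγ
  have hγ₂ : γ ∈ PathsTo Ω₂ := ⟨hγ.1, K, hK⟩
  have hc0 : isRealPt ((conjPath γ) 0) := fun k => by
    show (star (γ 0 k)).im = 0
    rw [show (star (γ 0 k)).im = -((γ 0 k).im) from rfl, hγ.1 k, neg_zero]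
  have hneg : ∀ {M : Hq}, M ∈ SUnits Ω₂ γ → -M ∈ SUnits Ω₂ (conjPath γ) := fun {M} hM =>
    ⟨sph_neg hM.1, fun t => by rw [liftP_conj]; exact hM.2 t⟩
  have hcm : conjPath γ ∈ PathsTo Ω₂ := ⟨hc0, -K, hneg hK⟩
  have e : ∀ {M : Hq}, M ∈ SUnits Ω₂ γ →
      G γ 0 + M * G γ 1 = G (conjPath γ) 0 + M * (-G (conjPath γ) 1) := by
    intro M hM
    have h1 := hG (conjPath γ) hcm (-M) (hneg hM)
    rw [liftP_conj] at h1
    calc G γ 0 + M * G γ 1 = G (conjPath γ) 0 + (-M) * G (conjPath γ) 1 := by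
          rw [← hG γ hγ₂ M hM]; exact h1
      _ = G (conjPath γ) 0 + M * (-G (conjPath γ) 1) := by rw [neg_mul, mul_neg]
  obtain ⟨h1, h2⟩ := stem_unique hKL (e hK) (e hL)
  exact ⟨h1.symm, by rw [h2, neg_neg]⟩

lemma pointStem_real {n : ℕ} (Ω₁ Ω₂ : Set (Fin n → Hq)) (g : (Fin n → Hq) → Hq)
    {q : Fin n → Hq} (h : isRealH q) : pointStem Ω₁ Ω₂ g q = ![g q, 0] := by
  unfold pointStem
  rw [if_pos h]

lemma pointStem_notReal {n : ℕ} (Ω₁ Ω₂ : Set (Fin n → Hq)) (g : (Fin n → Hq) → Hq)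
    {q : Fin n → Hq} (h : ¬ isRealH q)
    (hex : ∃ γ, γ ∈ PathsTo Ω₁ ∧ (∀ t, liftP γ (Jmap q) t ∈ Ω₁) ∧ liftP γ (Jmap q) 1 = q) :
    pointStem Ω₁ Ω₂ g q = subStem Ω₂ g hex.choose := by
  unfold pointStem
  rw [if_neg h, dif_pos hex]

lemma star_mul_expand {a b c d I : Hq} (hII : I * I = -1) :
    a * c - b * d + I * (b * c + a * d) = (a + I * b) * c + (I * (a + I * b)) * d := by
  have e : I * (a + I * b) = I * a + (-1) * b := by rw [mul_add, ← mul_assoc, hII]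
  rw [e]
  noncomm_ring

end Aux

/-- `f*g` is path-slice on `Ω₁`, and `F * F_{Ω₁}^g` (pointwise
`*`-product of stems) is a path-slice stem function of `f*g`. -/
theorem starProd_pathSlice {n : ℕ} (Ω₁ Ω₂ : Set (Fin n → Hq))
    (h₁ : RealPathConnected Ω₁) (h₂ : StemPreserving Ω₁ Ω₂)
    (f g : (Fin n → Hq) → Hq) (F : C(unitInterval, Fin n → ℂ) → Fin 2 → Hq)
    (hF : IsStem Ω₁ f F) (hg : IsPathSlice Ω₂ g) :
    IsPathSlice Ω₁ (starProd Ω₁ Ω₂ f g) ∧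
    IsStem Ω₁ (starProd Ω₁ Ω₂ f g) (fun γ => vstar (F γ) (subStem Ω₂ g γ)) := by
  obtain ⟨G, hG⟩ := hg
  have key : IsStem Ω₁ (starProd Ω₁ Ω₂ f g) (fun γ => vstar (F γ) (subStem Ω₂ g γ)) := by
    intro γ hγ I hI
    have hIS : I ∈ Sph := hI.1
    have hII : I * I = -1 := by have h' : I ^ 2 = -1 := hIS; rwa [pow_two] at h'
    obtain ⟨J₀, hJ₀, K₀, hK₀, hJK₀⟩ := h₂.1 γ hγ
    have hγ₂ : γ ∈ PathsTo Ω₂ := ⟨hγ.1, J₀, hJ₀⟩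
    have hpair : ∃ p : Hq × Hq, p.1 ∈ SUnits Ω₂ γ ∧ p.2 ∈ SUnits Ω₂ γ ∧ p.1 ≠ p.2 :=
      ⟨(J₀, K₀), hJ₀, hK₀, hJK₀⟩
    have hsub : subStem Ω₂ g γ = ![G γ 0, G γ 1] := subStem_eq hG hγ₂ hpair
    have hfq : f (liftP γ I 1) = F γ 0 + I * F γ 1 := hF γ hγ I hI
    show starProd Ω₁ Ω₂ f g (liftP γ I 1)
      = vstar (F γ) (subStem Ω₂ g γ) 0 + I * vstar (F γ) (subStem Ω₂ g γ) 1
    rw [hsub]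
    have hrhs : vstar (F γ) ![G γ 0, G γ 1] 0 + I * vstar (F γ) ![G γ 0, G γ 1] 1
        = f (liftP γ I 1) * G γ 0 + (I * f (liftP γ I 1)) * G γ 1 := by
      simp only [vstar, Matrix.cons_val_zero, Matrix.cons_val_one, Matrix.head_cons]
      rw [hfq]
      exact star_mul_expand hII
    rw [hrhs]
    unfold starProd
    by_cases hreal : isRealH (liftP γ I 1)
    · rw [pointStem_real Ω₁ Ω₂ g hreal, Jmap_real hreal]
      simp only [Matrix.cons_val_zero, Matrix.cons_val_one, Matrix.head_cons]
      have him : ∀ k, (γ 1 k).im = 0 := fun k => (psi_real_iff hIS (γ 1 k)).1 (hreal k)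
      have hlift : ∀ M : Hq, liftP γ M 1 = liftP γ I 1 := fun M => funext fun k => by
        show psi M (γ 1 k) = psi I (γ 1 k)
        rw [psi_of_im_zero M (him k), psi_of_im_zero I (him k)]
      have e1 : g (liftP γ I 1) + J₀ * 0 = G γ 0 + J₀ * G γ 1 := by
        rw [mul_zero, add_zero, ← hlift J₀]; exact hG γ hγ₂ J₀ hJ₀
      have e2 : g (liftP γ I 1) + K₀ * 0 = G γ 0 + K₀ * G γ 1 := by
        rw [mul_zero, add_zero, ← hlift K₀]; exact hG γ hγ₂ K₀ hK₀
      obtain ⟨hg0, hg1⟩ := stem_unique hJK₀ e1 e2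
      rw [← hg0, ← hg1]
      simp
    · obtain ⟨ε, hε, hJmap⟩ := Jmap_liftMap hIS (γ 1) hreal
      rcases hε with hε | hε
      · subst hε
        rw [one_smul] at hJmap
        have hJmap' : Jmap (liftP γ I 1) = I := hJmap
        have hex : ∃ δ, δ ∈ PathsTo Ω₁ ∧ (∀ t, liftP δ (Jmap (liftP γ I 1)) t ∈ Ω₁) ∧
            liftP δ (Jmap (liftP γ I 1)) 1 = liftP γ I 1 :=
          ⟨γ, hγ, by rw [hJmap']; exact fun t => hI.2 t, by rw [hJmap']⟩
        rw [pointStem_notReal Ω₁ Ω₂ g hreal hex]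
        obtain ⟨hδ1, hδ2, hδ3⟩ := hex.choose_spec
        set δ₀ := hex.choose with hδ₀eq
        rw [hJmap'] at hδ2 hδ3
        rw [show Jmap (liftP γ I 1) * f (liftP γ I 1) = I * f (liftP γ I 1) from by
          rw [hJmap']]
        have hend : γ 1 = δ₀ 1 :=
          liftMap_inj hIS (show liftMap I (γ 1) = liftMap I (δ₀ 1) from hδ3.symm)
        have hGδ := stem_endpoint_eq h₂ hG hIS hγ.1 hδ1.1 (fun t => hI.2 t) hδ2 hend
        obtain ⟨J₁, hJ₁, K₁, hK₁, hJK₁⟩ := h₂.1 δ₀ hδ1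
        rw [subStem_eq hG ⟨hδ1.1, J₁, hJ₁⟩ ⟨(J₁, K₁), hJ₁, hK₁, hJK₁⟩]
        simp only [Matrix.cons_val_zero, Matrix.cons_val_one, Matrix.head_cons]
        rw [← hGδ.1, ← hGδ.2]
      · subst hε
        rw [neg_one_smul ℝ I] at hJmap
        have hJmap' : Jmap (liftP γ I 1) = -I := hJmap
        have hnegI : -I ∈ Sph := sph_neg hIS
        have hc0 : isRealPt ((conjPath γ) 0) := fun k => by
          show (star (γ 0 k)).im = 0
          rw [show (star (γ 0 k)).im = -((γ 0 k).im) from rfl, hγ.1 k, neg_zero]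
        have hcjlift : ∀ t, liftP (conjPath γ) (-I) t = liftP γ I t := fun t => liftP_conj γ I t
        have hcj₁ : conjPath γ ∈ PathsTo Ω₁ :=
          ⟨hc0, -I, hnegI, fun t => by rw [hcjlift t]; exact hI.2 t⟩
        have hex : ∃ δ, δ ∈ PathsTo Ω₁ ∧ (∀ t, liftP δ (Jmap (liftP γ I 1)) t ∈ Ω₁) ∧
            liftP δ (Jmap (liftP γ I 1)) 1 = liftP γ I 1 :=
          ⟨conjPath γ, hcj₁, by rw [hJmap']; exact fun t => by rw [hcjlift t]; exact hI.2 t,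
            by rw [hJmap', hcjlift 1]⟩
        rw [pointStem_notReal Ω₁ Ω₂ g hreal hex]
        obtain ⟨hδ1, hδ2, hδ3⟩ := hex.choose_spec
        set δ₀ := hex.choose with hδ₀eq
        rw [hJmap'] at hδ2 hδ3
        rw [show Jmap (liftP γ I 1) * f (liftP γ I 1) = (-I) * f (liftP γ I 1) from by
          rw [hJmap']]
        have hend : (conjPath γ) 1 = δ₀ 1 := by
          apply liftMap_inj hnegI
          show liftMap (-I) ((conjPath γ) 1) = liftMap (-I) (δ₀ 1)
          rw [show liftMap (-I) ((conjPath γ) 1) = liftP (conjPath γ) (-I) 1 from rfl,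
            hcjlift 1]
          exact hδ3.symm
        have hGδ := stem_endpoint_eq h₂ hG hnegI hc0 hδ1.1
          (fun t => by rw [hcjlift t]; exact hI.2 t) hδ2 hend
        have hGc := stem_conj h₂ hG hγ
        obtain ⟨J₁, hJ₁, K₁, hK₁, hJK₁⟩ := h₂.1 δ₀ hδ1
        rw [subStem_eq hG ⟨hδ1.1, J₁, hJ₁⟩ ⟨(J₁, K₁), hJ₁, hK₁, hJK₁⟩]
        simp only [Matrix.cons_val_zero, Matrix.cons_val_one, Matrix.head_cons]
        rw [← hGδ.1, ← hGδ.2, hGc.1, hGc.2]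
        noncomm_ring
  exact ⟨⟨_, key⟩, key⟩
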